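/- Let c1 > 0 be a constant such that ‖V^{−1} − S‖ ≤ c1 Q²/(q³ m n) holds for the matrices V considered. Then, in the setting m = m(n) ≤ n, Q/q = o(n), for all sufficiently large n, every V ∈ L_{m,n}(q,Q) and every vector x ∈ R^{m+n−1} satisfy ‖V^{−1} x‖_∞ ≤ c1 Q² (m+n−1) ‖x‖_∞ / (q³ m n) + |x_{m+n}|/v_{m+n,m+n} + max_{1≤i≤m+n−1} |x_i|/v_{ii}, where x_{m+n} := Σ_{i=1}^m x_i − Σ_{i=m+1}^{m+n−1} x_i. -/

import Mathlib

open MeasureTheory ProbabilityTheory Filter Matrix Topology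
open scoped ENNReal NNReal

noncomputable section

namespace Affiliation

/-- Index type for the parameter vector `θ ∈ ℝ^{m+n-1}`:
`Sum.inl i` corresponds to the coordinate `α_i` (`1 ≤ i ≤ m`),
`Sum.inr j` to the coordinate `β_j` (`1 ≤ j ≤ n-1`). -/
abbrev Idx (m n : ℕ) := Fin m ⊕ Fin (n - 1)

/-- The logistic function `e^x / (1 + e^x)`. -/
def pf (x : ℝ) : ℝ := Real.exp x / (1 + Real.exp x)

/-- `e^x / (1 + e^x)^2`, the derivative of the logistic function. -/
def pf' (x : ℝ) : ℝ := Real.exp x / (1 + Real.exp x) ^ 2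

variable {m n : ℕ} {Ω : Type*}

/-- `α_i` read off from `θ`. -/
def alphaF (θ : Idx m n → ℝ) (i : Fin m) : ℝ := θ (Sum.inl i)

/-- `β_j` read off from `θ`, with the convention `β_n = 0`. -/
def betaF (θ : Idx m n → ℝ) (j : Fin n) : ℝ :=
  if h : (j : ℕ) < n - 1 then θ (Sum.inr ⟨j, h⟩) else 0

/-- The degree `d_i = Σ_j x_{ij}` of event `i`. -/
def degVec (X : Fin m → Fin n → Ω → ℝ) (ω : Ω) (i : Fin m) : ℝ := ∑ j, X i j ω

/-- The degree `b_j = Σ_i x_{ij}` of actor `j`. -/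
def bVec (X : Fin m → Fin n → Ω → ℝ) (ω : Ω) (j : Fin n) : ℝ := ∑ i, X i j ω

/-- The vector `g = (d_1, …, d_m, b_1, …, b_{n-1})`. -/
def gvec (X : Fin m → Fin n → Ω → ℝ) (ω : Ω) : Idx m n → ℝ :=
  Sum.elim (degVec X ω) (fun j => bVec X ω (Fin.castLE (Nat.sub_le n 1) j))

/-- The affiliation network model: the `x_{ij}` are mutually independent `{0,1}`-valued
random variables with `P(x_{ij} = 1) = e^{α_i+β_j}/(1+e^{α_i+β_j})` (convention `β_n = 0`). -/
structure IsAffilModel [MeasurableSpace Ω] (P : Measure Ω)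
    (θ : Idx m n → ℝ) (X : Fin m → Fin n → Ω → ℝ) : Prop where
  isProb : IsProbabilityMeasure P
  meas : ∀ i j, Measurable (X i j)
  binary : ∀ i j ω, X i j ω = 0 ∨ X i j ω = 1
  indep : iIndepFun
    (fun p : Fin m × Fin n => X p.1 p.2) P
  prob_one : ∀ i j, P {ω | X i j ω = 1} = ENNReal.ofReal (pf (alphaF θ i + betaF θ j))

/-- The expectation `E g`. -/
def Eg [MeasurableSpace Ω] (P : Measure Ω) (X : Fin m → Fin n → Ω → ℝ) (k : Idx m n) : ℝ :=
  ∫ ω, gvec X ω k ∂P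

/-- The likelihood equations: `θ` is an MLE for the observed degrees `(d, b)`. -/
def IsMLE (d : Fin m → ℝ) (b : Fin (n - 1) → ℝ) (θ : Idx m n → ℝ) : Prop :=
  (∀ i, d i = ∑ j : Fin n, pf (alphaF θ i + betaF θ j)) ∧
  (∀ j : Fin (n - 1), b j = ∑ i : Fin m, pf (alphaF θ i + θ (Sum.inr j)))

/-- `θ` is an MLE for the degrees observed at the sample point `ω`. -/
def IsMLEat (X : Fin m → Fin n → Ω → ℝ) (ω : Ω) (θ : Idx m n → ℝ) : Prop :=
  IsMLE (degVec X ω) (fun j => bVec X ω (Fin.castLE (Nat.sub_le n 1) j)) θ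

/-- The Fisher information matrix `V(θ)`. -/
def fisher (θ : Idx m n → ℝ) : Matrix (Idx m n) (Idx m n) ℝ :=
  fun k l => match k, l with
  | Sum.inl i, Sum.inl i' => if i = i' then ∑ j : Fin n, pf' (alphaF θ i + betaF θ j) else 0
  | Sum.inl i, Sum.inr j => pf' (alphaF θ i + θ (Sum.inr j))
  | Sum.inr j, Sum.inl i => pf' (alphaF θ i + θ (Sum.inr j))
  | Sum.inr j, Sum.inr j' => if j = j' then ∑ i : Fin m, pf' (alphaF θ i + θ (Sum.inr j)) else 0

/-- `v_{i,m+n} := v_{ii} - Σ_{j ≠ i} v_{ij}`. -/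
def vRem (V : Matrix (Idx m n) (Idx m n) ℝ) (i : Idx m n) : ℝ :=
  V i i - ∑ j ∈ Finset.univ.erase i, V i j

/-- `v_{m+n,m+n} := Σ_{i=1}^{m+n-1} v_{i,m+n}`. -/
def vnnOf (V : Matrix (Idx m n) (Idx m n) ℝ) : ℝ := ∑ i, vRem V i

/-- `v_{m+n,m+n}` for the Fisher information matrix,
`Σ_{i=1}^m (v_{ii} - Σ_{j=m+1}^{m+n-1} v_{ij})`. -/
def vnnFisher (θ : Idx m n → ℝ) : ℝ :=
  ∑ i : Fin m,
    (fisher θ (Sum.inl i) (Sum.inl i) - ∑ j : Fin (n - 1), fisher θ (Sum.inl i) (Sum.inr j))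

/-- The approximating matrix `S` built from `V`, with `1/v_{m+n,m+n}` replaced by `1/c`. -/
def approxSWith (V : Matrix (Idx m n) (Idx m n) ℝ) (c : ℝ) : Matrix (Idx m n) (Idx m n) ℝ :=
  fun k l => match k, l with
  | Sum.inl i, Sum.inl i' => (if i = i' then (V (Sum.inl i) (Sum.inl i))⁻¹ else 0) + c⁻¹
  | Sum.inr j, Sum.inr j' => (if j = j' then (V (Sum.inr j) (Sum.inr j))⁻¹ else 0) + c⁻¹
  | _, _ => -c⁻¹

/-- The approximating matrix `S` built from a matrix `V` in the class `L_{m,n}(q,Q)`. -/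
def approxS (V : Matrix (Idx m n) (Idx m n) ℝ) : Matrix (Idx m n) (Idx m n) ℝ :=
  approxSWith V (vnnOf V)

/-- The approximating matrix `S` built from the Fisher information matrix `V(θ)`. -/
def fisherS (θ : Idx m n → ℝ) : Matrix (Idx m n) (Idx m n) ℝ :=
  approxSWith (fisher θ) (vnnFisher θ)

/-- Membership in the matrix class `L_{m,n}(q,Q)`. -/
structure MemL (m n : ℕ) (q Q : ℝ) (V : Matrix (Idx m n) (Idx m n) ℝ) : Prop where
  symm : V.IsSymm
  nonneg : ∀ i j, 0 ≤ V i j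
  zero_ll : ∀ a b : Fin m, a ≠ b → V (Sum.inl a) (Sum.inl b) = 0
  zero_rr : ∀ a b : Fin (n - 1), a ≠ b → V (Sum.inr a) (Sum.inr b) = 0
  cross_lb : ∀ (a : Fin m) (b : Fin (n - 1)), q ≤ V (Sum.inl a) (Sum.inr b)
  cross_ub : ∀ (a : Fin m) (b : Fin (n - 1)), V (Sum.inl a) (Sum.inr b) ≤ Q
  diag_l_lb : ∀ a : Fin m,
    q ≤ V (Sum.inl a) (Sum.inl a) - ∑ b : Fin (n - 1), V (Sum.inl a) (Sum.inr b)
  diag_l_ub : ∀ a : Fin m,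
    V (Sum.inl a) (Sum.inl a) - ∑ b : Fin (n - 1), V (Sum.inl a) (Sum.inr b) ≤ Q
  diag_r : ∀ b : Fin (n - 1), V (Sum.inr b) (Sum.inr b) = ∑ a : Fin m, V (Sum.inl a) (Sum.inr b)

/-- `‖A‖ := max_{i,j} |a_{ij}|`. -/
def matNorm (A : Matrix (Idx m n) (Idx m n) ℝ) : ℝ :=
  ‖fun p : Idx m n × Idx m n => A p.1 p.2‖

/-- The index (0-based) `i` of `θ ∈ ℝ^{m+n-1}` as an element of `Idx m n`, if it exists. -/
def coordIdx (m n i : ℕ) : Option (Idx m n) :=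
  if h : i < m then some (Sum.inl ⟨i, h⟩)
  else if h' : i - m < n - 1 then some (Sum.inr ⟨i - m, h'⟩)
  else none

/-- The `i`-th coordinate (0-based) of a vector `x ∈ ℝ^{m+n-1}` (junk value `0` out of range). -/
def coordVal (x : Idx m n → ℝ) (i : ℕ) : ℝ := ((coordIdx m n i).map x).getD 0

/-- The upper-left `k × k` block of a matrix indexed by `Idx m n`. -/
def blockK (A : Matrix (Idx m n) (Idx m n) ℝ) (k : ℕ) : Matrix (Fin k) (Fin k) ℝ :=
  fun i j => match coordIdx m n (i : ℕ), coordIdx m n (j : ℕ) with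
    | some a, some b => A a b
    | _, _ => 0

/-- The inverse square root `A^{-1/2}` of a positive semidefinite matrix
(junk value `0` if `A` is not positive semidefinite). -/
def invSqrt {k : ℕ} (A : Matrix (Fin k) (Fin k) ℝ) : Matrix (Fin k) (Fin k) ℝ :=
  letI := Classical.propDecidable A.PosSemidef
  if h : A.PosSemidef then
    (h.1.eigenvectorUnitary.1 * diagonal ((↑) ∘ Real.sqrt ∘ h.1.eigenvalues) *
      (star h.1.eigenvectorUnitary : Matrix (Fin k) (Fin k) ℝ))⁻¹ else 0

/-- The standard Gaussian distribution `N(0, I_k)` on `ℝ^k`. -/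
def stdGaussian (k : ℕ) : Measure (Fin k → ℝ) :=
  Measure.pi fun _ => gaussianReal 0 1

/-- The function `F(θ)` whose components are
`F_i(θ) = d_i - Σ_k f(α_i + β_k)` and `F_{m+j}(θ) = b_j - Σ_k f(α_k + β_j)`. -/
def Fvec (f : ℝ → ℝ) (d : Fin m → ℝ) (b : Fin (n - 1) → ℝ) (θ : Idx m n → ℝ) : Idx m n → ℝ :=
  fun k => match k with
  | Sum.inl i => d i - ∑ j : Fin n, f (alphaF θ i + betaF θ j)
  | Sum.inr j => b j - ∑ i : Fin m, f (alphaF θ i + θ (Sum.inr j))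

/-- The Jacobian matrix `F'(θ)` of `Fvec f d b`. -/
def jacF (f : ℝ → ℝ) (θ : Idx m n → ℝ) : Matrix (Idx m n) (Idx m n) ℝ :=
  fun k l => match k, l with
  | Sum.inl i, Sum.inl i' =>
      if i = i' then -∑ j : Fin n, deriv f (alphaF θ i + betaF θ j) else 0
  | Sum.inl i, Sum.inr j => -deriv f (alphaF θ i + θ (Sum.inr j))
  | Sum.inr j, Sum.inl i => -deriv f (alphaF θ i + θ (Sum.inr j))
  | Sum.inr j, Sum.inr j' =>
      if j = j' then -∑ i : Fin m, deriv f (alphaF θ i + θ (Sum.inr j)) else 0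

/-- The Newton iterates `θ^{(k+1)} = θ^{(k)} - [F'(θ^{(k)})]⁻¹ F(θ^{(k)})`. -/
def newton (f : ℝ → ℝ) (d : Fin m → ℝ) (b : Fin (n - 1) → ℝ) (θ0 : Idx m n → ℝ) :
    ℕ → Idx m n → ℝ
  | 0 => θ0
  | k + 1 =>
    newton f d b θ0 k - (jacF f (newton f d b θ0 k))⁻¹.mulVec (Fvec f d b (newton f d b θ0 k))


lemma mulVec_approxS (V : Matrix (Idx m n) (Idx m n) ℝ) (x : Idx m n → ℝ) (k : Idx m n) :
    (approxS V).mulVec x k =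
      x k * (V k k)⁻¹ + (Sum.elim (fun _ => (1:ℝ)) (fun _ => -1) k) *
        ((∑ i : Fin m, x (Sum.inl i) - ∑ j : Fin (n-1), x (Sum.inr j)) * (vnnOf V)⁻¹) := by
  cases k with
  | inl i =>
    simp only [Matrix.mulVec, dotProduct, approxS, approxSWith, Fintype.sum_sum_type,
      add_mul, ite_mul, zero_mul, Finset.sum_add_distrib, Finset.sum_ite_eq,
      Finset.mem_univ, if_true, neg_mul, Finset.sum_neg_distrib, Sum.elim_inl,
      ← Finset.mul_sum]
    ring
  | inr j =>
    simp only [Matrix.mulVec, dotProduct, approxS, approxSWith, Fintype.sum_sum_type,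
      add_mul, ite_mul, zero_mul, Finset.sum_add_distrib, Finset.sum_ite_eq,
      Finset.mem_univ, if_true, neg_mul, Finset.sum_neg_distrib, Sum.elim_inr,
      ← Finset.mul_sum]
    ring

lemma vRem_inl {q Q : ℝ} (V : Matrix (Idx m n) (Idx m n) ℝ) (h : MemL m n q Q V) (i : Fin m) :
    vRem V (Sum.inl i) =
      V (Sum.inl i) (Sum.inl i) - ∑ b : Fin (n - 1), V (Sum.inl i) (Sum.inr b) := by
  rw [vRem, Finset.sum_erase_eq_sub (Finset.mem_univ _), Fintype.sum_sum_type,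
    Finset.sum_eq_single i (fun b _ hb => h.zero_ll i b (Ne.symm hb)) (by simp)]
  ring

lemma vRem_inr {q Q : ℝ} (V : Matrix (Idx m n) (Idx m n) ℝ) (h : MemL m n q Q V) (j : Fin (n-1)) :
    vRem V (Sum.inr j) = 0 := by
  rw [vRem, Finset.sum_erase_eq_sub (Finset.mem_univ _), Fintype.sum_sum_type,
    Finset.sum_eq_single j (fun b _ hb => h.zero_rr j b (Ne.symm hb)) (by simp)]
  have := h.diag_r j
  have hs : ∀ a : Fin m, V (Sum.inr j) (Sum.inl a) = V (Sum.inl a) (Sum.inr j) := by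
    intro a; rw [← h.symm.apply]
  rw [Finset.sum_congr rfl fun a _ => hs a, ← this]; ring

lemma vnnOf_nonneg {q Q : ℝ} (hq : 0 < q) (V : Matrix (Idx m n) (Idx m n) ℝ)
    (h : MemL m n q Q V) : 0 ≤ vnnOf V := by
  rw [vnnOf, Fintype.sum_sum_type]
  have h1 : 0 ≤ ∑ i : Fin m, vRem V (Sum.inl i) :=
    Finset.sum_nonneg fun i _ => by
      rw [vRem_inl V h i]; exact le_trans hq.le (h.diag_l_lb i)
  have h2 : ∑ j : Fin (n-1), vRem V (Sum.inr j) = 0 :=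
    Finset.sum_eq_zero fun j _ => vRem_inr V h j
  rw [h2]; linarith
/-- Lemma 2: bound for `‖V⁻¹ x‖_∞`. -/
theorem approx_inverse_apply
    (c1 : ℝ) (hc1 : 0 < c1)
    (m : ℕ → ℕ) (q Q : ℕ → ℝ)
    (hmn : ∀ N, m N ≤ N) (hq : ∀ N, 0 < q N) (hqQ : ∀ N, q N ≤ Q N)
    (ho : Tendsto (fun N => Q N / q N / N) atTop (𝓝 0))
    (hbound : ∀ N (V : Matrix (Idx (m N) N) (Idx (m N) N) ℝ),
      MemL (m N) N (q N) (Q N) V →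
        matNorm (V⁻¹ - approxS V) ≤ c1 * Q N ^ 2 / (q N ^ 3 * m N * N)) :
    ∀ᶠ N in atTop, ∀ V : Matrix (Idx (m N) N) (Idx (m N) N) ℝ,
      MemL (m N) N (q N) (Q N) V →
        ∀ x : Idx (m N) N → ℝ,
          ‖V⁻¹.mulVec x‖ ≤
            c1 * Q N ^ 2 * ((m N : ℝ) + N - 1) * ‖x‖ / (q N ^ 3 * m N * N)
            + |∑ i : Fin (m N), x (Sum.inl i) - ∑ j : Fin (N - 1), x (Sum.inr j)| / vnnOf V
            + ⨆ i : Idx (m N) N, |x i| / V i i := by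
  filter_upwards [eventually_ge_atTop 1] with N hN
  intro V hV x
  have hcard : (Fintype.card (Idx (m N) N) : ℝ) = (m N : ℝ) + N - 1 := by
    simp [Fintype.card_sum]
    push_cast [Nat.cast_sub hN]
    ring
  have hvnn : 0 ≤ vnnOf V := vnnOf_nonneg (hq N) V hV
  have hdiag : ∀ k, 0 ≤ V k k := fun k => hV.nonneg k k
  set D : ℝ := ∑ i : Fin (m N), x (Sum.inl i) - ∑ j : Fin (N - 1), x (Sum.inr j) with hD
  set T1 : ℝ := c1 * Q N ^ 2 * ((m N : ℝ) + N - 1) * ‖x‖ / (q N ^ 3 * m N * N) with hT1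
  have hmatn : 0 ≤ matNorm (V⁻¹ - approxS V) := norm_nonneg _
  have hxn : 0 ≤ ‖x‖ := norm_nonneg _
  have hcR : (0:ℝ) ≤ (m N : ℝ) + N - 1 := by
    have h1 : (1:ℝ) ≤ N := by exact_mod_cast hN
    have : (0:ℝ) ≤ (m N : ℝ) := Nat.cast_nonneg _
    linarith
  have hsup : 0 ≤ ⨆ i : Idx (m N) N, |x i| / V i i :=
    Real.iSup_nonneg fun i => div_nonneg (abs_nonneg _) (hdiag i)
  have hT1nn : 0 ≤ T1 := by
    rw [hT1]
    apply div_nonneg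
    · exact mul_nonneg (mul_nonneg (mul_nonneg hc1.le (sq_nonneg _)) hcR) hxn
    · exact mul_nonneg (mul_nonneg (pow_nonneg (hq N).le 3) (Nat.cast_nonneg _)) (Nat.cast_nonneg _)
  have key : ∀ k, |V⁻¹.mulVec x k| ≤ T1 + |D| / vnnOf V + ⨆ i : Idx (m N) N, |x i| / V i i := by
    intro k
    have hsplit : V⁻¹.mulVec x k = (V⁻¹ - approxS V).mulVec x k + (approxS V).mulVec x k := by
      rw [Matrix.sub_mulVec]; simp
    have hb1 : |(V⁻¹ - approxS V).mulVec x k| ≤ T1 := by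
      have step : |(V⁻¹ - approxS V).mulVec x k| ≤
          (Fintype.card (Idx (m N) N) : ℝ) * (matNorm (V⁻¹ - approxS V) * ‖x‖) := by
        rw [Matrix.mulVec, dotProduct]
        refine (Finset.abs_sum_le_sum_abs _ _).trans ?_
        have := Finset.sum_le_card_nsmul Finset.univ
          (fun l => |(V⁻¹ - approxS V) k l * x l|) (matNorm (V⁻¹ - approxS V) * ‖x‖) ?_
        · simpa [nsmul_eq_mul] using this
        · intro l _
          simp only [abs_mul]
          exact mul_le_mul
            (norm_le_pi_norm (fun p : Idx (m N) N × Idx (m N) N => (V⁻¹ - approxS V) p.1 p.2) (k, l))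
            (norm_le_pi_norm x l) (abs_nonneg _) hmatn
      refine step.trans ?_
      rw [hcard, hT1]
      have h2 : c1 * Q N ^ 2 * ((m N : ℝ) + N - 1) * ‖x‖ / (q N ^ 3 * m N * N)
          = (((m N : ℝ) + N - 1) * ‖x‖) * (c1 * Q N ^ 2 / (q N ^ 3 * m N * N)) := by ring
      rw [h2]
      calc ((m N : ℝ) + N - 1) * (matNorm (V⁻¹ - approxS V) * ‖x‖)
          = (((m N : ℝ) + N - 1) * ‖x‖) * matNorm (V⁻¹ - approxS V) := by ring
        _ ≤ (((m N : ℝ) + N - 1) * ‖x‖) * (c1 * Q N ^ 2 / (q N ^ 3 * m N * N)) :=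
            mul_le_mul_of_nonneg_left (hbound N V hV) (mul_nonneg hcR hxn)
    have hb2 : |(approxS V).mulVec x k| ≤ |x k| / V k k + |D| / vnnOf V := by
      rw [mulVec_approxS]
      refine (abs_add_le _ _).trans ?_
      have e1 : |x k * (V k k)⁻¹| = |x k| / V k k := by
        rw [abs_mul, abs_inv, abs_of_nonneg (hdiag k), div_eq_mul_inv]
      have e2 : |(Sum.elim (fun _ => (1:ℝ)) (fun _ => -1) k) * (D * (vnnOf V)⁻¹)|
          = |D| / vnnOf V := by
        have h3 : |Sum.elim (fun _ => (1:ℝ)) (fun _ => -1) k| = 1 := by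
          cases k <;> simp
        rw [abs_mul, h3, one_mul, abs_mul, abs_inv, abs_of_nonneg hvnn, div_eq_mul_inv]
      rw [e1, e2]
    have hb3 : |x k| / V k k ≤ ⨆ i : Idx (m N) N, |x i| / V i i :=
      le_ciSup (f := fun i : Idx (m N) N => |x i| / V i i)
        (Set.Finite.bddAbove (Set.finite_range _)) k
    calc |V⁻¹.mulVec x k| ≤ |(V⁻¹ - approxS V).mulVec x k| + |(approxS V).mulVec x k| := by
          rw [hsplit]; exact abs_add_le _ _
      _ ≤ T1 + (|x k| / V k k + |D| / vnnOf V) := add_le_add hb1 hb2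
      _ ≤ T1 + |D| / vnnOf V + ⨆ i : Idx (m N) N, |x i| / V i i := by linarith
  have hC : 0 ≤ T1 + |D| / vnnOf V + ⨆ i : Idx (m N) N, |x i| / V i i := by
    have : 0 ≤ |D| / vnnOf V := div_nonneg (abs_nonneg _) hvnn
    linarith
  refine (pi_norm_le_iff_of_nonneg hC).2 fun k => ?_
  simpa [Real.norm_eq_abs] using key k

end Affiliation
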